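/- Let k be an algebraically closed field of characteristic zero, n ≥ 1, and G a finite subgroup of GL_n(k). Suppose α : k^n → k^n is a polynomial map, i.e. there are polynomials P_1,…,P_n ∈ k[x_1,…,x_n] with α(x) = (P_1(x),…,P_n(x)), such that f(α(x)) = f(x) for every G-invariant polynomial f ∈ k[x_1,…,x_n] and every x ∈ k^n. Then there exists g ∈ G such that α(x) = g·x for all x ∈ k^n. -/
import Mathlib


open MvPolynomial

/-- Given a finite set `T` of points and a point `y ∉ T`, there is a polynomial
vanishing on `T` and taking the value `1` at `y`. -/
lemma sep_poly {k : Type*} [Field k] {n : ℕ} (T : Finset (Fin n → k)) (y : Fin n → k)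
    (hy : y ∉ T) :
    ∃ h : MvPolynomial (Fin n) k,
      MvPolynomial.eval y h = 1 ∧ ∀ t ∈ T, MvPolynomial.eval t h = 0 := by
  classical
  have key : ∀ t : Fin n → k, t ≠ y → ∃ p : MvPolynomial (Fin n) k,
      MvPolynomial.eval y p = 1 ∧ MvPolynomial.eval t p = 0 := by
    intro t ht
    obtain ⟨i, hi⟩ := Function.ne_iff.mp ht
    refine ⟨C (y i - t i)⁻¹ * (X i - C (t i)), ?_, ?_⟩
    · have : y i - t i ≠ 0 := sub_ne_zero.mpr (Ne.symm hi)
      simp [inv_mul_cancel₀ this]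
    · simp
  set p : (Fin n → k) → MvPolynomial (Fin n) k := fun t =>
    if h : t = y then 1 else Classical.choose (key t h) with hp
  have hp1 : ∀ t, MvPolynomial.eval y (p t) = 1 := by
    intro t
    by_cases h : t = y
    · simp [hp, h]
    · simp only [hp, dif_neg h]
      exact (Classical.choose_spec (key t h)).1
  have hp0 : ∀ t, t ≠ y → MvPolynomial.eval t (p t) = 0 := by
    intro t h
    simp only [hp, dif_neg h]
    exact (Classical.choose_spec (key t h)).2
  refine ⟨∏ t ∈ T, p t, ?_, ?_⟩
  · rw [map_prod]
    exact Finset.prod_eq_one fun t _ => hp1 t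
  · intro t ht
    rw [map_prod]
    exact Finset.prod_eq_zero ht (hp0 t (fun h => hy (h ▸ ht)))

/-- If `α : k^n → k^n` is a polynomial map (given by polynomials `P_1, …, P_n`) such
that `f(α(x)) = f(x)` for every `G`-invariant polynomial `f` and every point `x`, where
`G` is a finite subgroup of `GL_n(k)` and `k` is algebraically closed of characteristic
zero, then `α` is translation by some element `g ∈ G`. -/
theorem luna_stmt2 (k : Type*) [Field k] [IsAlgClosed k] [CharZero k]
    (n : ℕ) (hn : 1 ≤ n) (G : Subgroup (Matrix.GeneralLinearGroup (Fin n) k)) [Finite G]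
    (P : Fin n → MvPolynomial (Fin n) k)
    (α : (Fin n → k) → (Fin n → k))
    (hα : ∀ (x : Fin n → k) (i : Fin n), α x i = MvPolynomial.eval x (P i))
    (hinv : ∀ f : MvPolynomial (Fin n) k,
      (∀ g ∈ G, ∀ x : Fin n → k,
        MvPolynomial.eval (Matrix.mulVec (g : Matrix (Fin n) (Fin n) k) x) f =
          MvPolynomial.eval x f) →
      ∀ x : Fin n → k, MvPolynomial.eval (α x) f = MvPolynomial.eval x f) :
    ∃ g ∈ G, ∀ x : Fin n → k,
      α x = Matrix.mulVec (g : Matrix (Fin n) (Fin n) k) x := by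
  classical
  have : Fintype G := Fintype.ofFinite G
  set M : G → Matrix (Fin n) (Fin n) k :=
    fun g => ((g : Matrix.GeneralLinearGroup (Fin n) k) : Matrix (Fin n) (Fin n) k) with hM
  have hMmul : ∀ g g' : G, M (g * g') = M g * M g' := by
    intro g g'; simp [hM]
  -- linear substitution as evaluation
  have hlin : ∀ (m : Matrix (Fin n) (Fin n) k) (x : Fin n → k) (i : Fin n),
      MvPolynomial.eval x (∑ j, C (m i j) * X j) = m.mulVec x i := by
    intro m x i
    simp [Matrix.mulVec, dotProduct]
  have hsub_eval : ∀ (m : Matrix (Fin n) (Fin n) k) (x : Fin n → k)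
      (f : MvPolynomial (Fin n) k),
      MvPolynomial.eval x (bind₁ (fun i => ∑ j, C (m i j) * X j) f) =
        MvPolynomial.eval (m.mulVec x) f := by
    intro m x f
    have heq : (fun i => MvPolynomial.eval x (∑ j, C (m i j) * X j)) = m.mulVec x :=
      funext fun i => hlin m x i
    rw [show (MvPolynomial.eval x : MvPolynomial (Fin n) k →+* k) =
      eval₂Hom (RingHom.id k) x from rfl, eval₂Hom_bind₁]
    show MvPolynomial.eval (fun i => MvPolynomial.eval x (∑ j, C (m i j) * X j)) f = _
    rw [heq]
  -- Step 1 : pointwise, α x lies in the G-orbit of x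
  have step1 : ∀ x : Fin n → k, ∃ g : G, α x = (M g).mulVec x := by
    intro x
    by_contra hcon
    push_neg at hcon
    set y := α x with hy
    set T : Finset (Fin n → k) :=
      (Finset.univ.image fun g : G => (M g).mulVec x) ∪
        ((Finset.univ.image fun g : G => (M g).mulVec y) \ {y}) with hT
    have hyT : y ∉ T := by
      intro hmem
      rcases Finset.mem_union.mp hmem with h1 | h2
      · obtain ⟨g, -, hg⟩ := Finset.mem_image.mp h1
        exact hcon g hg.symm
      · exact (Finset.mem_sdiff.mp h2).2 (Finset.mem_singleton_self y)
    obtain ⟨h, hy1, ht0⟩ := sep_poly T y hyT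
    set F : MvPolynomial (Fin n) k :=
      ∑ g : G, bind₁ (fun i => ∑ j, C (M g i j) * X j) h with hF
    have hFeval : ∀ z, MvPolynomial.eval z F =
        ∑ g : G, MvPolynomial.eval ((M g).mulVec z) h := by
      intro z
      rw [hF, map_sum]
      exact Finset.sum_congr rfl fun g _ => hsub_eval (M g) z h
    have hFinv : ∀ g' ∈ G, ∀ z : Fin n → k,
        MvPolynomial.eval (Matrix.mulVec (g' : Matrix (Fin n) (Fin n) k) z) F =
          MvPolynomial.eval z F := by
      intro g' hg' z
      rw [hFeval, hFeval]
      have hre : ∀ g : G,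
          (M g).mulVec ((g' : Matrix (Fin n) (Fin n) k).mulVec z) =
            (M (g * ⟨g', hg'⟩)).mulVec z := by
        intro g
        rw [hMmul, ← Matrix.mulVec_mulVec]
      rw [Finset.sum_congr rfl fun g _ => by rw [hre g]]
      exact Fintype.sum_equiv (Equiv.mulRight (⟨g', hg'⟩ : G))
        _ _ (fun g => rfl)
    have hx0 : MvPolynomial.eval x F = 0 := by
      rw [hFeval]
      refine Finset.sum_eq_zero fun g _ => ht0 _ ?_
      simp [hT]
    have hyF : MvPolynomial.eval y F =
        ((Finset.univ.filter fun g : G => (M g).mulVec y = y).card : k) := by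
      rw [hFeval]
      rw [← Finset.sum_filter_add_sum_filter_not Finset.univ
        (fun g : G => (M g).mulVec y = y)]
      have h1 : ∑ g ∈ Finset.univ.filter (fun g : G => (M g).mulVec y = y),
          MvPolynomial.eval ((M g).mulVec y) h =
          (Finset.univ.filter fun g : G => (M g).mulVec y = y).card • (1 : k) := by
        rw [Finset.sum_congr rfl fun g hg => by
          rw [(Finset.mem_filter.mp hg).2, hy1]]
        simp
      have h2 : ∑ g ∈ Finset.univ.filter (fun g : G => ¬(M g).mulVec y = y),
          MvPolynomial.eval ((M g).mulVec y) h = 0 := by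
        refine Finset.sum_eq_zero fun g hg => ht0 _ ?_
        have hne := (Finset.mem_filter.mp hg).2
        simp only [hT, Finset.mem_union, Finset.mem_sdiff, Finset.mem_image,
          Finset.mem_univ, true_and, Finset.mem_singleton]
        exact Or.inr ⟨⟨g, rfl⟩, hne⟩
      rw [h1, h2]
      simp
    have hcard : (Finset.univ.filter fun g : G => (M g).mulVec y = y).Nonempty := by
      refine ⟨1, Finset.mem_filter.mpr ⟨Finset.mem_univ _, ?_⟩⟩
      have : M 1 = 1 := by simp [hM]
      rw [this, Matrix.one_mulVec]
    have := hinv F hFinv x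
    rw [← hy, hyF, hx0] at this
    exact (Nat.cast_ne_zero.mpr (Finset.card_ne_zero_of_mem hcard.choose_spec)) this
  -- Step 2 : one group element works for all x
  have step2 : ∃ g : G, ∀ i, P i - ∑ j, C (M g i j) * X j = 0 := by
    by_contra hcon
    push_neg at hcon
    choose idx hidx using hcon
    have hQ : (∏ g : G, (P (idx g) - ∑ j, C (M g (idx g) j) * X j)) ≠ 0 :=
      Finset.prod_ne_zero_iff.mpr fun g _ => hidx g
    apply hQ
    apply MvPolynomial.funext
    intro x
    obtain ⟨g, hg⟩ := step1 x
    rw [map_prod, map_zero]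
    refine Finset.prod_eq_zero (Finset.mem_univ g) ?_
    rw [map_sub, hlin, ← hα, hg]
    exact sub_self _
  obtain ⟨g, hg⟩ := step2
  refine ⟨(g : Matrix.GeneralLinearGroup (Fin n) k), g.2, fun x => funext fun i => ?_⟩
  have := hg i
  rw [sub_eq_zero] at this
  rw [hα x i, this, hlin]
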